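/- In the lattice Pic X' = ℤ ⟨χ_0⟩ ⊕ (lattice of E7 weights) of a degree-2 del Pezzo surface, with exceptional classes ℓ_μ indexed by the 56 weights μ of the minuscule E7-representation and intersection numbers (ℓ_μ · ℓ_ν) = 1/2 − (μ, ν): for any weight ξ of the adjoint representation of E7 (i.e., any E7 root) with ξ ≠ 0, there exist weights μ, ν of the 56-dimensional representation with ξ = μ + ν and (ℓ_μ · ℓ_ν) = 1, i.e., (μ, ν) = −1/2. -/

import Mathlib

open scoped RealInnerProductSpace Classical

/-- The root system of type `E8` in the standard model inside `ℝ⁸`: the vectors `±eᵢ ± eⱼ`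
(`i ≠ j`, i.e. integer vectors with exactly two nonzero coordinates equal to `±1`) together with
the vectors `(±1/2, …, ±1/2)` with an even number of minus signs. -/
def IsE8Root (x : EuclideanSpace ℝ (Fin 8)) : Prop :=
  ((∀ i, x i = 1 ∨ x i = -1 ∨ x i = 0) ∧
      (Finset.univ.filter fun i => x i ≠ 0).card = 2) ∨
  ((∀ i, x i = 1 / 2 ∨ x i = -1 / 2) ∧
      Even (Finset.univ.filter fun i => x i = -1 / 2).card)

/-- The vector `δ = e₇ + e₈`, an `E8` root.  The roots orthogonal to `δ` form a root system of
type `E7`; the roots `β` with `(β, δ) = −1` project (via `β ↦ β + δ/2`) onto the 56 weights of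
the minuscule representation of `E7`, of norm `3/2`. -/
noncomputable def deltaE8 : EuclideanSpace ℝ (Fin 8) :=
  EuclideanSpace.single 6 1 + EuclideanSpace.single 7 1

noncomputable def vv (f : Fin 8 → ℝ) : EuclideanSpace ℝ (Fin 8) := (WithLp.equiv 2 _).symm f

@[simp] lemma vv_apply (f : Fin 8 → ℝ) (k : Fin 8) : vv f k = f k := rfl

lemma inner_sum8 (x y : EuclideanSpace ℝ (Fin 8)) : ⟪x, y⟫ = ∑ k, x k * y k := by
  simp [PiLp.inner_apply, RCLike.inner_apply, conj_trivial]
  exact Finset.sum_congr rfl (fun _ _ => mul_comm _ _)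

noncomputable def tw (i j : Fin 8) (a b : ℝ) : EuclideanSpace ℝ (Fin 8) :=
  vv fun k => if k = i then a else if k = j then b else 0

lemma tw_apply (i j k : Fin 8) (a b : ℝ) :
    tw i j a b k = if k = i then a else if k = j then b else 0 := rfl

lemma isRoot_tw (i j : Fin 8) (a b : ℝ) (hij : i ≠ j)
    (ha : a = 1 ∨ a = -1) (hb : b = 1 ∨ b = -1) : IsE8Root (tw i j a b) := by
  have ha0 : a ≠ 0 := by rcases ha with h | h <;> rw [h] <;> norm_num
  have hb0 : b ≠ 0 := by rcases hb with h | h <;> rw [h] <;> norm_num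
  left
  constructor
  · intro k
    rw [tw_apply]
    by_cases h1 : k = i
    · simp [h1]; tauto
    · by_cases h2 : k = j
      · simp [h1, h2, hij.symm]; tauto
      · simp [h1, h2]
  · have : (Finset.univ.filter fun k => tw i j a b k ≠ 0) = {i, j} := by
      ext k
      rw [Finset.mem_filter]
      simp only [Finset.mem_filter, Finset.mem_univ, true_and, Finset.mem_insert,
        Finset.mem_singleton, tw_apply]
      by_cases h1 : k = i
      · simp [h1, ha0]
      · by_cases h2 : k = j
        · simp [h1, h2, hij.symm, hb0]
        · simp [h1, h2]
    rw [this, Finset.card_pair hij]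

lemma inner_tw_left (i j : Fin 8) (a b : ℝ) (hij : i ≠ j) (y : EuclideanSpace ℝ (Fin 8)) :
    ⟪tw i j a b, y⟫ = a * y i + b * y j := by
  rw [inner_sum8]
  rw [← Finset.sum_subset (Finset.subset_univ ({i, j} : Finset (Fin 8)))
    (by
      intro k _ hk
      simp only [Finset.mem_insert, Finset.mem_singleton, not_or] at hk
      rw [tw_apply]
      simp [hk.1, hk.2])]
  rw [Finset.sum_pair hij]
  have h1 : tw i j a b i = a := by rw [tw_apply]; simp
  have h2 : tw i j a b j = b := by rw [tw_apply]; simp [hij.symm]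
  rw [h1, h2]

lemma delta_eq_tw : deltaE8 = tw 6 7 1 1 := by
  ext k
  simp only [deltaE8, tw_apply, PiLp.add_apply, EuclideanSpace.single_apply]
  by_cases h1 : k = 6 <;> by_cases h2 : k = 7 <;> simp [h1, h2]

lemma delta_apply (k : Fin 8) : deltaE8 k = if k = 6 then 1 else if k = 7 then 1 else 0 := by
  rw [delta_eq_tw, tw_apply]

lemma inner_delta (y : EuclideanSpace ℝ (Fin 8)) : ⟪y, deltaE8⟫ = y 6 + y 7 := by
  rw [real_inner_comm, delta_eq_tw, inner_tw_left 6 7 1 1 (by decide)]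
  ring

lemma inner_delta_delta : ⟪deltaE8, deltaE8⟫ = 2 := by
  rw [inner_delta]
  rw [delta_eq_tw, tw_apply, tw_apply]
  norm_num

lemma key (β γ : EuclideanSpace ℝ (Fin 8)) (h0 : ⟪β, γ⟫ = 0)
    (hb : ⟪β, deltaE8⟫ = -1) (hg : ⟪γ, deltaE8⟫ = -1) :
    ⟪β + (1 / 2 : ℝ) • deltaE8, γ + (1 / 2 : ℝ) • deltaE8⟫ = -(1 / 2) := by
  rw [inner_add_left, inner_add_right, inner_add_right, real_inner_smul_left,
    real_inner_smul_right, real_inner_smul_left, real_inner_smul_right]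
  rw [h0, hb]
  rw [real_inner_comm deltaE8 γ] at *
  rw [hg, inner_delta_delta]
  ring

lemma half_case (ξ : EuclideanSpace ℝ (Fin 8))
    (hcoord : ∀ i, ξ i = 1 / 2 ∨ ξ i = -1 / 2)
    (heven : Even (Finset.univ.filter fun i => ξ i = -1 / 2).card)
    (t t' : Fin 8) (htt' : t ≠ t')
    (hid : ∀ y : EuclideanSpace ℝ (Fin 8), ⟪y, deltaE8⟫ = y t + y t')
    (hδt : deltaE8 t = 1) (hδt' : deltaE8 t' = 1)
    (hδ0 : ∀ k, k ≠ t → k ≠ t' → deltaE8 k = 0)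
    (hξt : ξ t = -(1 / 2)) (hξt' : ξ t' = 1 / 2) :
    ∃ β γ : EuclideanSpace ℝ (Fin 8),
      IsE8Root β ∧ IsE8Root γ ∧ ⟪β, deltaE8⟫ = -1 ∧ ⟪γ, deltaE8⟫ = -1 ∧
      ⟪β, γ⟫ = 0 ∧ (∀ k, ξ k = β k + γ k + deltaE8 k) := by
  obtain ⟨i0, hi0t, hi0t', hξi0⟩ :
      ∃ i0 : Fin 8, i0 ≠ t ∧ i0 ≠ t' ∧ ξ i0 = -(1 / 2) := by
    by_contra hc
    push_neg at hc
    have hfil : (Finset.univ.filter fun k => ξ k = -1 / 2) = {t} := by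
      ext k
      simp only [Finset.mem_filter, Finset.mem_univ, true_and, Finset.mem_singleton]
      constructor
      · intro hk
        by_contra hkt
        by_cases hkt' : k = t'
        · rw [hkt', hξt'] at hk; norm_num at hk
        · exact hc k hkt hkt' (by rw [hk]; norm_num)
      · intro hk; rw [hk, hξt]; norm_num
    rw [hfil, Finset.card_singleton] at heven
    exact Nat.not_even_one heven
  set β : EuclideanSpace ℝ (Fin 8) :=
    vv fun k => if k = i0 then 1 / 2 else if k = t then -(1 / 2)
      else if k = t' then -(1 / 2) else ξ k with hβ
  have hβi0 : β i0 = 1 / 2 := by rw [hβ, vv_apply]; simp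
  have hβt : β t = -(1 / 2) := by rw [hβ, vv_apply]; simp [Ne.symm hi0t]
  have hβt' : β t' = -(1 / 2) := by rw [hβ, vv_apply]; simp [Ne.symm hi0t', htt'.symm]
  have hβo : ∀ k, k ≠ i0 → k ≠ t → k ≠ t' → β k = ξ k := by
    intro k h1 h2 h3; rw [hβ, vv_apply]; simp [h1, h2, h3]
  set γ : EuclideanSpace ℝ (Fin 8) := tw i0 t (-1) (-1) with hγ
  have hγi0 : γ i0 = -1 := by rw [hγ, tw_apply]; simp
  have hγt : γ t = -1 := by rw [hγ, tw_apply]; simp [Ne.symm hi0t]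
  have hγo : ∀ k, k ≠ i0 → k ≠ t → γ k = 0 := by
    intro k h1 h2; rw [hγ, tw_apply]; simp [h1, h2]
  refine ⟨β, γ, ?_, isRoot_tw i0 t (-1) (-1) hi0t (Or.inr rfl) (Or.inr rfl), ?_, ?_, ?_, ?_⟩
  · right
    constructor
    · intro k
      rw [hβ, vv_apply]
      by_cases h1 : k = i0
      · rw [if_pos h1]; norm_num
      · by_cases h2 : k = t
        · rw [if_neg h1, if_pos h2]; norm_num
        · by_cases h3 : k = t'
          · rw [if_neg h1, if_neg h2, if_pos h3]; norm_num
          · rw [if_neg h1, if_neg h2, if_neg h3]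
            refine (hcoord k).imp (fun h => h) fun h => ?_
            rw [h]
    · have hfe : (Finset.univ.filter fun k => β k = -1 / 2) =
          insert t' ((Finset.univ.filter fun k => ξ k = -1 / 2).erase i0) := by
        ext k
        simp only [Finset.mem_filter, Finset.mem_univ, true_and, Finset.mem_insert,
          Finset.mem_erase]
        by_cases h1 : k = i0
        · rw [h1, hβi0]
          simp [hi0t']
          norm_num
        · by_cases h2 : k = t
          · rw [h2, hβt]
            constructor
            · intro _
              exact Or.inr ⟨Ne.symm hi0t, by rw [hξt]; norm_num⟩
            · intro _
              norm_num
          · by_cases h3 : k = t'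
            · rw [h3]
              constructor
              · intro _
                exact Or.inl rfl
              · intro _
                rw [hβt']
                norm_num
            · rw [hβo k h1 h2 h3]
              simp [h1, h3]
      have hmem : i0 ∈ Finset.univ.filter fun k => ξ k = -1 / 2 := by
        simp only [Finset.mem_filter, Finset.mem_univ, true_and]
        rw [hξi0]; norm_num
      have hnm : t' ∉ (Finset.univ.filter fun k => ξ k = -1 / 2).erase i0 := by
        intro hm
        have := (Finset.mem_erase.mp hm).2
        simp only [Finset.mem_filter, Finset.mem_univ, true_and] at this
        rw [hξt'] at this; norm_num at this
      rw [hfe, Finset.card_insert_of_notMem hnm, Finset.card_erase_of_mem hmem,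
        Nat.sub_add_cancel (Finset.card_pos.mpr ⟨i0, hmem⟩)]
      exact heven
  · rw [hid, hβt, hβt']; norm_num
  · rw [hid, hγt, hγo t' (Ne.symm hi0t') htt'.symm]; norm_num
  · rw [real_inner_comm, hγ, inner_tw_left i0 t (-1) (-1) hi0t]
    rw [← hγ] at *
    rw [hβi0, hβt]; norm_num
  · intro k
    by_cases h1 : k = i0
    · rw [h1, hξi0, hβi0, hγi0, hδ0 i0 hi0t hi0t']; norm_num
    · by_cases h2 : k = t
      · rw [h2, hξt, hβt, hγt, hδt]; norm_num
      · by_cases h3 : k = t'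
        · rw [h3, hξt', hβt', hγo t' (Ne.symm hi0t') htt'.symm, hδt']; norm_num
        · rw [hβo k h1 h2 h3, hγo k h1 h2, hδ0 k h2 h3]; ring

/-- In the lattice `Pic X' = ℤ⟨χ₀⟩ ⊕ (E7 weight lattice)` of a degree-2 del
Pezzo surface, with exceptional classes `ℓ_μ` indexed by the 56 weights `μ` of the minuscule
`E7`-representation and intersection numbers `(ℓ_μ · ℓ_ν) = 1/2 − (μ, ν)`: every `E7` root `ξ`
(i.e. every weight of the adjoint representation with `ξ ≠ 0`) can be written as `ξ = μ + ν`
with `μ, ν` weights of the 56-dimensional representation satisfying `(ℓ_μ · ℓ_ν) = 1`, i.e.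
`(μ, ν) = −1/2`.  Concretely, with `E7 = {ξ ∈ E8 : (ξ, δ) = 0}` and the weights realized as
`μ = β + δ/2` for `E8` roots `β` with `(β, δ) = −1`. -/
theorem statement_13 (ξ : EuclideanSpace ℝ (Fin 8))
    (hξ : IsE8Root ξ) (hξE7 : ⟪ξ, deltaE8⟫ = 0) :
    ∃ β γ : EuclideanSpace ℝ (Fin 8),
      IsE8Root β ∧ IsE8Root γ ∧
      ⟪β, deltaE8⟫ = -1 ∧ ⟪γ, deltaE8⟫ = -1 ∧
      ξ = (β + (1 / 2 : ℝ) • deltaE8) + (γ + (1 / 2 : ℝ) • deltaE8) ∧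
      ⟪β + (1 / 2 : ℝ) • deltaE8, γ + (1 / 2 : ℝ) • deltaE8⟫ = -(1 / 2) := by
  have h67 : ξ 6 + ξ 7 = 0 := by rw [inner_delta] at hξE7; exact hξE7
  have main : ∀ β γ : EuclideanSpace ℝ (Fin 8), IsE8Root β → IsE8Root γ →
      ⟪β, deltaE8⟫ = -1 → ⟪γ, deltaE8⟫ = -1 → ⟪β, γ⟫ = 0 →
      (∀ k, ξ k = β k + γ k + deltaE8 k) →
      ∃ β γ : EuclideanSpace ℝ (Fin 8),
        IsE8Root β ∧ IsE8Root γ ∧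
        ⟪β, deltaE8⟫ = -1 ∧ ⟪γ, deltaE8⟫ = -1 ∧
        ξ = (β + (1 / 2 : ℝ) • deltaE8) + (γ + (1 / 2 : ℝ) • deltaE8) ∧
        ⟪β + (1 / 2 : ℝ) • deltaE8, γ + (1 / 2 : ℝ) • deltaE8⟫ = -(1 / 2) := by
    intro β γ h1 h2 h3 h4 h5 h6
    refine ⟨β, γ, h1, h2, h3, h4, ?_, key β γ h5 h3 h4⟩
    ext k
    have hk := h6 k
    simp only [PiLp.add_apply, PiLp.smul_apply, smul_eq_mul]
    rw [hk]; ring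
  rcases hξ with ⟨hcoord, hcard⟩ | ⟨hcoord, heven⟩
  · -- integer root
    rcases Finset.card_eq_two.mp hcard with ⟨i, j, hij, hset⟩
    have hsupp : ∀ k, ξ k ≠ 0 ↔ k = i ∨ k = j := by
      intro k
      have := Finset.ext_iff.mp hset k
      simpa using this
    have hξi : ξ i ≠ 0 := (hsupp i).mpr (Or.inl rfl)
    have hξj : ξ j ≠ 0 := (hsupp j).mpr (Or.inr rfl)
    by_cases h6 : ξ 6 = 0
    · have h7 : ξ 7 = 0 := by linarith
      have hi6 : i ≠ 6 := by rintro rfl; exact hξi h6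
      have hi7 : i ≠ 7 := by rintro rfl; exact hξi h7
      have hj6 : j ≠ 6 := by rintro rfl; exact hξj h6
      have hj7 : j ≠ 7 := by rintro rfl; exact hξj h7
      have hvi : ξ i = 1 ∨ ξ i = -1 := by rcases hcoord i with h | h | h <;> tauto
      have hvj : ξ j = 1 ∨ ξ j = -1 := by rcases hcoord j with h | h | h <;> tauto
      refine main (tw i 7 (ξ i) (-1)) (tw j 6 (ξ j) (-1))
        (isRoot_tw i 7 (ξ i) (-1) hi7 hvi (Or.inr rfl))
        (isRoot_tw j 6 (ξ j) (-1) hj6 hvj (Or.inr rfl)) ?_ ?_ ?_ ?_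
      · rw [inner_delta, tw_apply, tw_apply]
        simp [Ne.symm hi6, Ne.symm hi7]
      · rw [inner_delta, tw_apply, tw_apply]
        simp [Ne.symm hj6, Ne.symm hj7]
      · rw [inner_tw_left i 7 (ξ i) (-1) hi7, tw_apply, tw_apply]
        simp [hij, hi6, Ne.symm hj7]
      · intro k
        rw [tw_apply, tw_apply, delta_apply]
        by_cases hki : k = i
        · subst hki
          simp [hi6, hi7, hij]
        · by_cases hkj : k = j
          · subst hkj
            simp [hj6, hj7, Ne.symm hij]
          · have hk0 : ξ k = 0 := by
              by_contra hc
              rcases (hsupp k).mp hc with rfl | rfl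
              · exact hki rfl
              · exact hkj rfl
            by_cases hk6 : k = 6
            · subst hk6; simp [hki, hkj, h6]
            · by_cases hk7 : k = 7
              · subst hk7; simp [hki, hkj, h7]
              · simp [hki, hkj, hk6, hk7, hk0]
    · -- support = {6, 7}
      have h7 : ξ 7 ≠ 0 := by intro h; exact h6 (by linarith)
      have hk0 : ∀ k : Fin 8, k ≠ 6 → k ≠ 7 → ξ k = 0 := by
        intro k hk6 hk7
        by_contra hc
        have h₆ := (hsupp 6).mp h6
        have h₇ := (hsupp 7).mp h7
        have hk := (hsupp k).mp hc
        rcases h₆ with h₆ | h₆ <;> rcases h₇ with h₇ | h₇ <;> rcases hk with hk | hk <;>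
          first
          | exact absurd (h₆.trans h₇.symm) (by decide)
          | exact absurd (h₇.trans h₆.symm) (by decide)
          | exact hk6 (hk.trans h₆.symm)
          | exact hk7 (hk.trans h₇.symm)
          | exact hk6 (hk.trans h₇.symm)
          | exact hk7 (hk.trans h₆.symm)
      have e0 : ξ 0 = 0 := hk0 0 (by decide) (by decide)
      have e1 : ξ 1 = 0 := hk0 1 (by decide) (by decide)
      have e2 : ξ 2 = 0 := hk0 2 (by decide) (by decide)
      have e3 : ξ 3 = 0 := hk0 3 (by decide) (by decide)
      have e4 : ξ 4 = 0 := hk0 4 (by decide) (by decide)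
      have e5 : ξ 5 = 0 := hk0 5 (by decide) (by decide)
      rcases hcoord 6 with hv | hv | hv
      · have hv7 : ξ 7 = -1 := by linarith
        refine main (tw 0 7 1 (-1)) (tw 0 7 (-1) (-1))
          (isRoot_tw 0 7 1 (-1) (by decide) (Or.inl rfl) (Or.inr rfl))
          (isRoot_tw 0 7 (-1) (-1) (by decide) (Or.inr rfl) (Or.inr rfl)) ?_ ?_ ?_ ?_
        · rw [inner_delta, tw_apply, tw_apply]; simp
        · rw [inner_delta, tw_apply, tw_apply]; simp
        · rw [inner_tw_left 0 7 1 (-1) (by decide), tw_apply, tw_apply]; simp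
        · intro k
          rw [tw_apply, tw_apply, delta_apply]
          by_cases hka : k = 0
          · subst hka; rw [e0]; simp
          · by_cases hk6 : k = 6
            · subst hk6; rw [hv]; simp [hka]
            · by_cases hk7 : k = 7
              · subst hk7; rw [hv7]; simp [hka]
              · rw [hk0 k hk6 hk7]; simp [hka, hk6, hk7]
      · have hv7 : ξ 7 = 1 := by linarith
        refine main (tw 0 6 1 (-1)) (tw 0 6 (-1) (-1))
          (isRoot_tw 0 6 1 (-1) (by decide) (Or.inl rfl) (Or.inr rfl))
          (isRoot_tw 0 6 (-1) (-1) (by decide) (Or.inr rfl) (Or.inr rfl)) ?_ ?_ ?_ ?_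
        · rw [inner_delta, tw_apply, tw_apply]; simp
        · rw [inner_delta, tw_apply, tw_apply]; simp
        · rw [inner_tw_left 0 6 1 (-1) (by decide), tw_apply, tw_apply]; simp
        · intro k
          rw [tw_apply, tw_apply, delta_apply]
          by_cases hka : k = 0
          · subst hka; rw [e0]; simp
          · by_cases hk6 : k = 6
            · subst hk6; rw [hv]; simp [hka]
            · by_cases hk7 : k = 7
              · subst hk7; rw [hv7]; simp [hka]
              · rw [hk0 k hk6 hk7]; simp [hka, hk6, hk7]
      · exact absurd hv h6
  · -- half-integer root
    rcases hcoord 6 with h6v | h6v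
    · have h7v : ξ 7 = -(1 / 2 : ℝ) := by linarith
      obtain ⟨β, γ, hr1, hr2, hd1, hd2, hip, hsum⟩ :=
        half_case ξ hcoord heven 7 6 (by decide)
          (fun y => by rw [inner_delta]; ring)
          (by simp [delta_apply]) (by simp [delta_apply])
          (fun k hk7 hk6 => by rw [delta_apply]; simp [hk6, hk7])
          (by norm_num [h7v]) h6v
      exact main β γ hr1 hr2 hd1 hd2 hip hsum
    · have h7v : ξ 7 = (1 / 2 : ℝ) := by linarith
      obtain ⟨β, γ, hr1, hr2, hd1, hd2, hip, hsum⟩ :=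
        half_case ξ hcoord heven 6 7 (by decide)
          (fun y => by rw [inner_delta])
          (by simp [delta_apply]) (by simp [delta_apply])
          (fun k hk6 hk7 => by rw [delta_apply]; simp [hk6, hk7])
          (by norm_num [h6v]) h7v
      exact main β γ hr1 hr2 hd1 hd2 hip hsum
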